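/- For natural numbers r ≤ m, the ZMod 2-dimension (finrank) of the Reed–Muller code RM(m, r) equals ∑_{i=0}^{r} binomial(m, i). -/
import Mathlib


noncomputable section

/-- The monomial evaluation function `v_A(z) = ∏_{i ∈ A} z i`. -/
def vA (m : ℕ) (A : Finset (Fin m)) : (Fin m → ZMod 2) → ZMod 2 :=
  fun z => ∏ i ∈ A, z i

/-- The Reed–Muller code `RM(m, r)`: the span of the monomials of degree at most `r`. -/
def RM (m r : ℕ) : Submodule (ZMod 2) ((Fin m → ZMod 2) → ZMod 2) :=
  Submodule.span (ZMod 2) { f | ∃ A : Finset (Fin m), A.card ≤ r ∧ f = vA m A }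

lemma vA_indicator (m : ℕ) (A S : Finset (Fin m)) :
    vA m A (fun i => if i ∈ S then 1 else 0) = if A ⊆ S then 1 else 0 := by
  unfold vA
  by_cases hAS : A ⊆ S
  · rw [if_pos hAS]
    exact Finset.prod_eq_one (fun i hi => if_pos (hAS hi))
  · rw [if_neg hAS]
    obtain ⟨i, hiA, hiS⟩ := Finset.not_subset.mp hAS
    exact Finset.prod_eq_zero hiA (if_neg hiS)

lemma vA_linearIndependent (m : ℕ) :
    LinearIndependent (ZMod 2) (vA m) := by
  rw [Fintype.linearIndependent_iff]
  intro g hg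
  have key : ∀ S : Finset (Fin m), ∑ A ∈ S.powerset, g A = 0 := by
    intro S
    have h1 := congrFun hg (fun i => if i ∈ S then 1 else 0)
    simp only [Finset.sum_apply, Pi.smul_apply, Pi.zero_apply, smul_eq_mul,
      vA_indicator, mul_ite, mul_one, mul_zero] at h1
    rw [Finset.sum_ite, Finset.sum_const, smul_zero, add_zero] at h1
    rw [← h1]
    apply Finset.sum_congr _ (fun _ _ => rfl)
    ext A
    simp [Finset.mem_powerset]
  intro A
  induction A using Finset.strongInduction with
  | _ A ih =>
    have h2 := key A
    rw [← Finset.sum_erase_add _ _ (Finset.mem_powerset_self A)] at h2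
    have h3 : ∑ B ∈ A.powerset.erase A, g B = 0 := by
      apply Finset.sum_eq_zero
      intro B hB
      rw [Finset.mem_erase, Finset.mem_powerset] at hB
      exact ih B (lt_of_le_of_ne hB.2 hB.1)
    rw [h3, zero_add] at h2
    exact h2

theorem rm_finrank (m r : ℕ) (h : r ≤ m) :
    Module.finrank (ZMod 2) (RM m r) = ∑ i ∈ Finset.range (r + 1), m.choose i := by
  classical
  set ι := {A : Finset (Fin m) // A.card ≤ r}
  have hli : LinearIndependent (ZMod 2) (fun A : ι => vA m A.1) :=
    (vA_linearIndependent m).comp _ Subtype.val_injective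
  have hspan : RM m r = Submodule.span (ZMod 2) (Set.range (fun A : ι => vA m A.1)) := by
    unfold RM
    congr 1
    ext f
    constructor
    · rintro ⟨A, hA, rfl⟩; exact ⟨⟨A, hA⟩, rfl⟩
    · rintro ⟨⟨A, hA⟩, rfl⟩; exact ⟨A, hA, rfl⟩
  rw [hspan, finrank_span_eq_card hli]
  have hcard : Fintype.card ι = (Finset.univ.filter (fun A : Finset (Fin m) => A.card ≤ r)).card := by
    simp [ι, Fintype.card_subtype]
  rw [hcard]
  have hset : (Finset.univ.filter (fun A : Finset (Fin m) => A.card ≤ r)) =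
      (Finset.range (r + 1)).biUnion (fun i => Finset.univ.powersetCard i) := by
    ext A
    simp [Finset.mem_powersetCard, Nat.lt_succ_iff]
  rw [hset, Finset.card_biUnion]
  · apply Finset.sum_congr rfl
    intro i _
    rw [Finset.card_powersetCard]
    simp
  · intro i _ j _ hij
    simp only [Finset.disjoint_left]
    intro A hA hA'
    rw [Finset.mem_powersetCard] at hA hA'
    exact hij (hA.2.symm.trans hA'.2)

end
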